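/- Let (E, ρ) be a separable metric space and let (Y_t)_{t≥0} be an E-valued stochastic process on a probability space all of whose sample paths are càdlàg, i.e. t ↦ Y_t(ω) is right-continuous on [0, ∞) and has a left limit at every t > 0. Assume the process is stationary: for every s ≥ 0, the process (Y_{t+s})_{t≥0} has the same finite-dimensional distributions as (Y_t)_{t≥0}. Then for every fixed t > 0, almost surely the left limit lim_{s↑t} Y_s equals Y_t; that is, the process is almost surely continuous at each fixed deterministic time. -/

import Mathlib

open MeasureTheory
open scoped NNReal

set_option maxHeartbeats 1000000

/-- A stationary càdlàg process with values in a separable metric space is, at each fixed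
deterministic time `t > 0`, almost surely continuous: the left limit at `t` equals `Y t`.
Stationarity is expressed through equality of all finite-dimensional distributions of the
time-shifted process with those of the original process. -/
theorem stationary_cadlag_ae_continuous_at_fixed_time
    {Ω E : Type*} [MeasurableSpace Ω] [MetricSpace E]
    [TopologicalSpace.SeparableSpace E] [MeasurableSpace E] [BorelSpace E]
    (P : Measure Ω) [IsProbabilityMeasure P]
    (Y : ℝ≥0 → Ω → E) (hmeas : ∀ t, Measurable (Y t))
    -- right-continuity of every sample path
    (hrc : ∀ ω, ∀ t : ℝ≥0,
      Filter.Tendsto (fun s => Y s ω) (nhdsWithin t (Set.Ici t)) (nhds (Y t ω)))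
    -- existence of left limits of every sample path at every positive time
    (hll : ∀ ω, ∀ t : ℝ≥0, 0 < t →
      ∃ l : E, Filter.Tendsto (fun s => Y s ω) (nhdsWithin t (Set.Iio t)) (nhds l))
    -- stationarity: the finite-dimensional distributions are shift-invariant
    (hstat : ∀ s : ℝ≥0, ∀ k : ℕ, ∀ tm : Fin k → ℝ≥0,
      Measure.map (fun ω => fun i => Y (tm i + s) ω) P
        = Measure.map (fun ω => fun i => Y (tm i) ω) P) :
    ∀ t : ℝ≥0, 0 < t →
      ∀ᵐ ω ∂P, Filter.Tendsto (fun s => Y s ω) (nhdsWithin t (Set.Iio t)) (nhds (Y t ω)) := by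
  haveI : SecondCountableTopology E := UniformSpace.secondCountable_of_separable E
  intro t ht
  choose L hL using fun ω => hll ω t ht
  -- the sequence of shifts
  set δ : ℕ → ℝ≥0 := fun n => t / (n + 2) with hδ
  have hδpos : ∀ n, 0 < δ n := fun n => by positivity
  have hδle : ∀ n, δ n ≤ t := fun n => div_le_self (zero_le : (0:ℝ≥0) ≤ t) (one_le_two.trans le_add_self)
  have hδ0 : Filter.Tendsto δ Filter.atTop (nhds 0) := by
    rw [hδ]
    simp only [NNReal.tendsto_coe.symm]
    push_cast
    exact Filter.Tendsto.const_div_atTop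
      (Filter.tendsto_atTop_add_const_right _ 2 tendsto_natCast_atTop_atTop) _
  have hsub_tendsto : Filter.Tendsto (fun n => t - δ n) Filter.atTop
      (nhdsWithin t (Set.Iio t)) := by
    apply tendsto_nhdsWithin_of_tendsto_nhds_of_eventually_within
    · have : Filter.Tendsto (fun n => t - δ n) Filter.atTop (nhds (t - 0)) :=
        Filter.Tendsto.sub tendsto_const_nhds hδ0
      simpa using this
    · exact Filter.Eventually.of_forall fun n => tsub_lt_self ht (hδpos n)
  have hadd_tendsto : Filter.Tendsto (fun n => t + δ n) Filter.atTop
      (nhdsWithin t (Set.Ici t)) := by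
    apply tendsto_nhdsWithin_of_tendsto_nhds_of_eventually_within
    · have : Filter.Tendsto (fun n => t + δ n) Filter.atTop (nhds (t + 0)) :=
        Filter.Tendsto.add tendsto_const_nhds hδ0
      simpa using this
    · exact Filter.Eventually.of_forall fun n => Set.mem_Ici.mpr (le_add_right le_rfl)
  -- the two sequences of distances
  set X : ℕ → Ω → ℝ := fun n ω => dist (Y (t - δ n) ω) (Y t ω) with hX
  set Z : ℕ → Ω → ℝ := fun n ω => dist (Y t ω) (Y (t + δ n) ω) with hZ
  have hXlim : ∀ ω, Filter.Tendsto (fun n => X n ω) Filter.atTop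
      (nhds (dist (L ω) (Y t ω))) :=
    fun ω => Filter.Tendsto.dist ((hL ω).comp hsub_tendsto) tendsto_const_nhds
  have hZlim : ∀ ω, Filter.Tendsto (fun n => Z n ω) Filter.atTop (nhds 0) := by
    intro ω
    have := Filter.Tendsto.dist (tendsto_const_nhds (x := Y t ω))
      ((hrc ω t).comp hadd_tendsto)
    simpa using this
  have hXmeas : ∀ n (ε : ℝ), MeasurableSet {ω | ε < X n ω} :=
    fun n ε => measurableSet_lt measurable_const ((hmeas _).dist (hmeas _))
  have hZmeas : ∀ n (ε : ℝ), MeasurableSet {ω | ε < Z n ω} :=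
    fun n ε => measurableSet_lt measurable_const ((hmeas _).dist (hmeas _))
  -- equality in law from stationarity
  have key : ∀ n (ε : ℝ), P {ω | ε < X n ω} = P {ω | ε < Z n ω} := by
    intro n ε
    have h := hstat (δ n) 2 ![t - δ n, t]
    have hm1 : Measurable fun ω => fun i : Fin 2 => Y ((![t - δ n, t] i) + δ n) ω :=
      measurable_pi_lambda _ fun i => hmeas _
    have hm2 : Measurable fun ω => fun i : Fin 2 => Y (![t - δ n, t] i) ω :=
      measurable_pi_lambda _ fun i => hmeas _
    have hS : MeasurableSet {v : Fin 2 → E | ε < dist (v 0) (v 1)} :=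
      measurableSet_lt measurable_const ((measurable_pi_apply 0).dist (measurable_pi_apply 1))
    have h2 := congrArg (fun μ : Measure (Fin 2 → E) => μ {v | ε < dist (v 0) (v 1)}) h
    simp only [Measure.map_apply hm1 hS, Measure.map_apply hm2 hS] at h2
    have hcancel : t - δ n + δ n = t := tsub_add_cancel_of_le (hδle n)
    have e1 : (fun ω => fun i : Fin 2 => Y ((![t - δ n, t] i) + δ n) ω) ⁻¹'
        {v | ε < dist (v 0) (v 1)} = {ω | ε < Z n ω} := by
      ext ω
      simp [Set.mem_preimage, hcancel, hZ]
    have e2 : (fun ω => fun i : Fin 2 => Y (![t - δ n, t] i) ω) ⁻¹'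
        {v | ε < dist (v 0) (v 1)} = {ω | ε < X n ω} := by
      ext ω
      simp [Set.mem_preimage, hX]
    rw [e1, e2] at h2
    exact h2.symm
  -- the probability of an ε-deviation tends to 0
  have hZto0 : ∀ ε : ℝ, 0 < ε →
      Filter.Tendsto (fun n => P {ω | ε < Z n ω}) Filter.atTop (nhds 0) := by
    intro ε hε
    have h0 : Filter.Tendsto (fun n => P {ω | ε < Z n ω}) Filter.atTop
        (nhds (P (∅ : Set Ω))) := by
      refine tendsto_measure_of_tendsto_indicator_of_isFiniteMeasure (A := ∅)
        Filter.atTop P (fun n => hZmeas n ε) ?_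
      intro ω
      filter_upwards [Filter.Tendsto.eventually_lt_const hε (hZlim ω)] with n hn
      simp only [Set.mem_setOf_eq, Set.mem_empty_iff_false, iff_false, not_lt]
      exact hn.le
    simpa using h0
  -- each tail-intersection event is null
  have hnull : ∀ (k N : ℕ),
      P (⋂ n, ⋂ (_ : N ≤ n), {ω | (1 : ℝ) / (k + 1) < X n ω}) = 0 := by
    intro k N
    set A := ⋂ n, ⋂ (_ : N ≤ n), {ω | (1 : ℝ) / (k + 1) < X n ω} with hA
    have hle : ∀ n, N ≤ n → P A ≤ P {ω | (1 : ℝ) / (k + 1) < Z n ω} := by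
      intro n hn
      rw [← key]
      apply measure_mono
      intro ω hω
      simp only [hA, Set.mem_iInter] at hω
      exact hω n hn
    have : P A ≤ 0 := by
      refine ge_of_tendsto (hZto0 (1 / (k + 1)) (by positivity)) ?_
      filter_upwards [Filter.eventually_ge_atTop N] with n hn
      exact hle n hn
    exact le_antisymm this zero_le
  -- conclusion
  rw [MeasureTheory.ae_iff]
  have hsub : {ω | ¬ Filter.Tendsto (fun s => Y s ω) (nhdsWithin t (Set.Iio t))
        (nhds (Y t ω))}
      ⊆ ⋃ (k : ℕ), ⋃ (N : ℕ), ⋂ n, ⋂ (_ : N ≤ n), {ω | (1 : ℝ) / (k + 1) < X n ω} := by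
    intro ω hω
    simp only [Set.mem_setOf_eq] at hω
    have hLne : L ω ≠ Y t ω := by
      intro hcontra
      exact hω (hcontra ▸ hL ω)
    have hdpos : 0 < dist (L ω) (Y t ω) := dist_pos.mpr hLne
    obtain ⟨k, hk⟩ := exists_nat_one_div_lt hdpos
    have : ∀ᶠ n in Filter.atTop, (1 : ℝ) / (k + 1) < X n ω :=
      Filter.Tendsto.eventually_const_lt hk (hXlim ω)
    obtain ⟨N, hN⟩ := this.exists_forall_of_atTop
    simp only [Set.mem_iUnion, Set.mem_iInter, Set.mem_setOf_eq]
    exact ⟨k, N, fun n hn => by exact_mod_cast hN n hn⟩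
  exact measure_mono_null hsub
    (measure_iUnion_null fun k => measure_iUnion_null fun N => hnull k N)
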